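/- Let ℓ : [0,1] → ℝ^d be a segment, C a finite set of k points in ℝ^d with weights w, lip an r-log-Lipschitz function, and D(x) := min_{c∈C} lip(w(c)·‖c − ℓ(x)‖₂). If D is Riemann integrable on [0,1], then for every x' ∈ [0,1], D(x') ≤ (20k)^{r+1} · ∫₀¹ D(x) dx. -/

import Mathlib

open MeasureTheory
open scoped ENNReal

set_option maxHeartbeats 4000000

private lemma sq_le_aux (a b : ℝ) (hb : 0 ≤ b) (h : a ^ 2 ≤ b ^ 2) : a ≤ b := by
  nlinarith [sq_nonneg (a - b), sq_nonneg (a + b)]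

private lemma bad_set_vol_aux (d k : ℕ) (hk1 : (1:ℝ) ≤ (k:ℝ))
    (u v c : EuclideanSpace ℝ (Fin d)) (x' : ℝ) (hx' : x' ∈ Set.Icc (0:ℝ) 1) :
    MeasureTheory.volume
        ({x : ℝ | (20 * (k:ℝ)) * ‖c - (u + x • v)‖ < ‖c - (u + x' • v)‖} ∩ Set.Ioc (0:ℝ) 1)
      ≤ ENNReal.ofReal (1 / (9 * (k:ℝ))) := by
  set K : ℝ := 20 * k with hKdef
  have hK20 : (20:ℝ) ≤ K := by nlinarith
  have hKpos : (0:ℝ) < K := by linarith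
  set g : ℝ → ℝ := fun x => ‖c - (u + x • v)‖ with hgdef
  have hg_nonneg : ∀ x, 0 ≤ g x := fun x => norm_nonneg _
  set S : Set ℝ := {x : ℝ | K * g x < g x'} with hSdef
  show volume (S ∩ Set.Ioc (0:ℝ) 1) ≤ ENNReal.ofReal (1 / (9 * (k:ℝ)))
  rcases Set.eq_empty_or_nonempty (S ∩ Set.Ioc 0 1) with he | ⟨x0, hx0S, hx0I⟩
  · simp [he]
  · have hgx0 : K * g x0 < g x' := hx0S
    have hx01 : (0:ℝ) ≤ x0 ∧ x0 ≤ 1 := ⟨hx0I.1.le, hx0I.2⟩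
    have hgx'pos : 0 < g x' := by nlinarith [hg_nonneg x0]
    set s := g x' / K with hsdef
    have hspos : 0 < s := div_pos hgx'pos hKpos
    have hvne : v ≠ 0 := by
      intro hv
      have hgg : g x0 = g x' := by simp [hgdef, hv]
      nlinarith [hg_nonneg x0]
    have hvpos : 0 < ‖v‖ := norm_pos_iff.mpr hvne
    set m : ℝ := (inner ℝ (c - u) v : ℝ) / ‖v‖ ^ 2 with hmdef
    have hinner : (inner ℝ (c - u) v : ℝ) = m * ‖v‖ ^ 2 := by
      rw [hmdef]; field_simp
    have hid : ∀ x : ℝ, (g x) ^ 2 = (g m) ^ 2 + (x - m) ^ 2 * ‖v‖ ^ 2 := by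
      intro x
      have expand : ∀ y : ℝ, (g y) ^ 2 = ‖c - u‖ ^ 2 - 2 * y * (m * ‖v‖ ^ 2)
          + y ^ 2 * ‖v‖ ^ 2 := by
        intro y
        have h0 : c - (u + y • v) = (c - u) - y • v := by abel
        simp only [hgdef, h0]
        rw [norm_sub_sq_real, real_inner_smul_right, norm_smul, hinner]
        simp [mul_pow, sq_abs]
        ring
      rw [expand x, expand m]
      ring
    have hlow : ∀ x : ℝ, ‖v‖ * |x - m| ≤ g x := by
      intro x
      apply sq_le_aux _ _ (hg_nonneg x)
      have h1 : (‖v‖ * |x - m|) ^ 2 = (x - m) ^ 2 * ‖v‖ ^ 2 := by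
        rw [mul_pow, sq_abs]; ring
      rw [h1, hid x]
      nlinarith [sq_nonneg (g m)]
    have hgm : g m ≤ g x0 := by
      apply sq_le_aux _ _ (hg_nonneg x0)
      rw [hid x0]
      nlinarith [sq_nonneg (x0 - m), sq_nonneg ‖v‖]
    have hgx0s : g x0 < s := by
      rw [hsdef, lt_div_iff₀ hKpos]; linarith [hgx0]
    have hx0m : |x0 - m| ≤ s / ‖v‖ := by
      rw [le_div_iff₀ hvpos]
      nlinarith [hlow x0]
    have hxx0 : |x' - x0| ≤ 1 := by
      rw [abs_le]; constructor <;> [nlinarith [hx'.1, hx'.2, hx01.1, hx01.2];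
        nlinarith [hx'.1, hx'.2, hx01.1, hx01.2]]
    have h2 : |x' - m| ≤ 1 + s / ‖v‖ := by
      calc |x' - m| = |(x' - x0) + (x0 - m)| := by ring_nf
        _ ≤ |x' - x0| + |x0 - m| := abs_add_le _ _
        _ ≤ 1 + s / ‖v‖ := add_le_add hxx0 hx0m
    have hgx'eq : g x' = K * s := by rw [hsdef]; field_simp
    have h3 : (K * s) ^ 2 ≤ s ^ 2 + (x' - m) ^ 2 * ‖v‖ ^ 2 := by
      have hh := hid x'
      rw [hgx'eq] at hh
      nlinarith [hg_nonneg m, hgm, hgx0s]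
    have h6 : |x' - m| * ‖v‖ ≤ ‖v‖ + s := by
      have := mul_le_mul_of_nonneg_right h2 hvpos.le
      have heq : (1 + s / ‖v‖) * ‖v‖ = ‖v‖ + s := by field_simp
      linarith [heq ▸ this]
    have h4 : (K ^ 2 - 1) * s ^ 2 ≤ (‖v‖ + s) ^ 2 := by
      have h5 : (x' - m) ^ 2 * ‖v‖ ^ 2 ≤ (‖v‖ + s) ^ 2 := by
        nlinarith [abs_nonneg (x' - m), sq_abs (x' - m), norm_nonneg v, h6,
          mul_nonneg (abs_nonneg (x' - m)) (norm_nonneg v)]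
      nlinarith
    have h7 : 19 * (k:ℝ) * s ≤ ‖v‖ + s := by
      apply sq_le_aux _ _ (by positivity)
      have : (19 * (k:ℝ) * s) ^ 2 = 361 * (k:ℝ) ^ 2 * s ^ 2 := by ring
      rw [this]
      have hK2 : (K ^ 2 - 1) * s ^ 2 = (400 * (k:ℝ) ^ 2 - 1) * s ^ 2 := by
        rw [hKdef]; ring
      nlinarith [mul_pos hspos hspos, sq_nonneg ((k:ℝ) - 1), mul_pos (mul_pos hspos hspos) (mul_pos (lt_of_lt_of_le one_pos hk1) (lt_of_lt_of_le one_pos hk1))]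
    have h8 : 18 * (k:ℝ) * s ≤ ‖v‖ := by nlinarith
    have hsub : S ∩ Set.Ioc 0 1 ⊆ Set.Icc (m - s / ‖v‖) (m + s / ‖v‖) := by
      rintro x ⟨hxS, -⟩
      have hgxK : K * g x < g x' := hxS
      have hgxs : g x < s := by
        rw [hsdef, lt_div_iff₀ hKpos]; linarith
      have hxm : |x - m| ≤ s / ‖v‖ := by
        rw [le_div_iff₀ hvpos]
        nlinarith [hlow x]
      rw [Set.mem_Icc]
      rw [abs_le] at hxm
      constructor <;> linarith [hxm.1, hxm.2]
    have step1 : volume (S ∩ Set.Ioc 0 1) ≤ ENNReal.ofReal (2 * s / ‖v‖) := by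
      have h9 := measure_mono (μ := volume) hsub
      rwa [Real.volume_Icc,
        show m + s / ‖v‖ - (m - s / ‖v‖) = 2 * s / ‖v‖ from by ring] at h9
    have hp9 : (0:ℝ) < 9 * (k:ℝ) := by linarith
    have hrle : 2 * s / ‖v‖ ≤ 1 / (9 * (k:ℝ)) := by
      have h10 : 2 * s * (9 * (k:ℝ)) ≤ 1 * ‖v‖ := by nlinarith [h8, hspos]
      exact (div_le_div_iff₀ hvpos hp9).mpr h10
    exact le_trans step1 (ENNReal.ofReal_le_ofReal hrle)

theorem segment_integral_sensitivity_bound (d k : ℕ) (hk : 1 ≤ k) (r : ℝ) (hr : 0 ≤ r)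
    (u v : EuclideanSpace ℝ (Fin d))
    (C : Finset (EuclideanSpace ℝ (Fin d))) (hC : C.Nonempty) (hCcard : C.card = k)
    (w : EuclideanSpace ℝ (Fin d) → ℝ) (hw : ∀ c ∈ C, 0 ≤ w c)
    (lip : ℝ → ℝ)
    (hmono : ∀ x y, 0 ≤ x → x ≤ y → lip x ≤ lip y)
    (hnonneg : ∀ x, 0 ≤ x → 0 ≤ lip x)
    (hlip : ∀ c x, 1 ≤ c → 0 ≤ x → lip (c * x) ≤ c ^ r * lip x)
    (D : ℝ → ℝ)
    (hD : ∀ x : ℝ, D x = C.inf' hC (fun c => lip (w c * ‖c - (u + x • v)‖)))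
    (hint : IntervalIntegrable D MeasureTheory.volume 0 1)
    (x' : ℝ) (hx' : x' ∈ Set.Icc (0:ℝ) 1) :
    D x' ≤ (20 * k : ℝ) ^ (r + 1) * ∫ x in (0:ℝ)..1, D x := by
  have hk1 : (1:ℝ) ≤ (k:ℝ) := by exact_mod_cast hk
  set K : ℝ := 20 * k with hKdef
  have hK20 : (20:ℝ) ≤ K := by nlinarith
  have hK1 : (1:ℝ) ≤ K := by linarith
  have hKpos : (0:ℝ) < K := by linarith
  set g : EuclideanSpace ℝ (Fin d) → ℝ → ℝ := fun c x => ‖c - (u + x • v)‖ with hgdef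
  have hg_nonneg : ∀ c x, 0 ≤ g c x := fun c x => norm_nonneg _
  have hDnn : ∀ x, 0 ≤ D x := by
    intro x; rw [hD]
    apply Finset.le_inf'
    intro c hc
    exact hnonneg _ (mul_nonneg (hw c hc) (norm_nonneg _))
  set s0 : ℝ := D x' with hs0
  have hs0nn : 0 ≤ s0 := hDnn x'
  have hKr : (0:ℝ) < K ^ r := Real.rpow_pos_of_pos hKpos r
  set thr : ℝ := s0 / K ^ r with hthr
  have hthrnn : 0 ≤ thr := div_nonneg hs0nn hKr.le
  set S : EuclideanSpace ℝ (Fin d) → Set ℝ := fun c => {x | K * g c x < g c x'} with hSdef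
  have hSmeas : ∀ c, MeasurableSet (S c) := by
    intro c
    have hcont : Continuous fun x : ℝ => K * g c x := by
      apply continuous_const.mul
      simp only [hgdef]
      fun_prop
    exact (isOpen_lt hcont continuous_const).measurableSet
  -- claim: if D x is small, then x is in some S c
  have claim : ∀ x, D x < thr → ∃ c ∈ C, x ∈ S c := by
    intro x hx
    obtain ⟨c, hc, hceq⟩ := Finset.exists_mem_eq_inf' hC
      (fun c => lip (w c * ‖c - (u + x • v)‖))
    refine ⟨c, hc, ?_⟩
    by_contra hcon
    simp only [hSdef, Set.mem_setOf_eq, not_lt] at hcon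
    have h1 : s0 ≤ lip (w c * g c x') := by
      rw [hs0, hD]; exact Finset.inf'_le _ hc
    have h2 : w c * g c x' ≤ K * (w c * g c x) := by
      have := mul_le_mul_of_nonneg_left hcon (hw c hc)
      nlinarith
    have h3 : lip (w c * g c x') ≤ lip (K * (w c * g c x)) :=
      hmono _ _ (mul_nonneg (hw c hc) (hg_nonneg c x')) h2
    have h4 : lip (K * (w c * g c x)) ≤ K ^ r * lip (w c * g c x) :=
      hlip K _ hK1 (mul_nonneg (hw c hc) (hg_nonneg c x))
    have h5 : lip (w c * g c x) = D x := by rw [hD, hceq]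
    rw [h5] at h4
    have h6 : K ^ r * D x < K ^ r * thr := by
      exact mul_lt_mul_of_pos_left hx hKr
    have h7 : K ^ r * thr = s0 := by
      rw [hthr]; field_simp
    linarith
  have hvolS : ∀ c ∈ C, volume (S c ∩ Set.Ioc (0:ℝ) 1) ≤ ENNReal.ofReal (1 / (9 * (k:ℝ))) := by
    intro c _
    exact bad_set_vol_aux d k hk1 u v c x' hx'
  set U : Set ℝ := ⋃ c ∈ C, S c with hUdef
  have hUmeas : MeasurableSet U :=
    MeasurableSet.biUnion C.countable_toSet (fun c _ => hSmeas c)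
  set G : Set ℝ := Set.Ioc (0:ℝ) 1 \ U with hGdef
  have hGmeas : MeasurableSet G := measurableSet_Ioc.diff hUmeas
  have hUvol : volume (U ∩ Set.Ioc (0:ℝ) 1) ≤ ENNReal.ofReal (1/9 : ℝ) := by
    have hUeq : U ∩ Set.Ioc (0:ℝ) 1 = ⋃ c ∈ C, (S c ∩ Set.Ioc (0:ℝ) 1) := by
      ext x
      simp only [hUdef, Set.mem_inter_iff, Set.mem_iUnion, exists_prop]
      tauto
    rw [hUeq]
    refine le_trans (measure_biUnion_finset_le C _) ?_
    refine le_trans (Finset.sum_le_sum hvolS) ?_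
    rw [Finset.sum_const, hCcard, nsmul_eq_mul]
    rw [show ((k:ℝ≥0∞)) = ENNReal.ofReal ((k:ℝ)) from (ENNReal.ofReal_natCast k).symm,
      ← ENNReal.ofReal_mul (by positivity)]
    apply ENNReal.ofReal_le_ofReal
    have hkne : (k:ℝ) ≠ 0 := by linarith
    rw [show (k:ℝ) * (1 / (9 * (k:ℝ))) = 1/9 from by field_simp]
  have hGvol : ENNReal.ofReal (8/9 : ℝ) ≤ volume G := by
    have hsplit : Set.Ioc (0:ℝ) 1 ⊆ G ∪ (U ∩ Set.Ioc (0:ℝ) 1) := by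
      intro x hx
      by_cases hxU : x ∈ U
      · exact Or.inr ⟨hxU, hx⟩
      · exact Or.inl ⟨hx, hxU⟩
    have h1 : (1:ℝ≥0∞) ≤ volume G + ENNReal.ofReal (1/9 : ℝ) :=
      calc (1:ℝ≥0∞) = volume (Set.Ioc (0:ℝ) 1) := by simp [Real.volume_Ioc]
        _ ≤ volume (G ∪ (U ∩ Set.Ioc (0:ℝ) 1)) := measure_mono hsplit
        _ ≤ volume G + volume (U ∩ Set.Ioc (0:ℝ) 1) := measure_union_le _ _
        _ ≤ volume G + ENNReal.ofReal (1/9 : ℝ) := add_le_add le_rfl hUvol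
    have h2 : (1:ℝ≥0∞) = ENNReal.ofReal (8/9:ℝ) + ENNReal.ofReal (1/9:ℝ) := by
      rw [← ENNReal.ofReal_add (by norm_num) (by norm_num)]
      norm_num
    rw [h2] at h1
    exact (ENNReal.add_le_add_iff_right ENNReal.ofReal_ne_top).mp h1
  have hGne : volume G ≠ ⊤ := by
    have hle : volume G ≤ volume (Set.Ioc (0:ℝ) 1) := measure_mono Set.diff_subset
    exact ne_top_of_le_ne_top (by simp [Real.volume_Ioc]) hle
  have hGtoReal : (8/9:ℝ) ≤ (volume G).toReal := by
    have := ENNReal.toReal_mono hGne hGvol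
    rwa [ENNReal.toReal_ofReal (by norm_num)] at this
  have hGD : ∀ x ∈ G, thr ≤ D x := by
    intro x hx
    by_contra h
    push_neg at h
    obtain ⟨c, hc, hcS⟩ := claim x h
    exact hx.2 (Set.mem_biUnion hc hcS)
  have hIntOn : IntegrableOn D (Set.Ioc (0:ℝ) 1) volume :=
    (intervalIntegrable_iff_integrableOn_Ioc_of_le (by norm_num)).mp hint
  have hIG : IntegrableOn D G volume := hIntOn.mono_set Set.diff_subset
  have hint1 : thr * (volume G).toReal ≤ ∫ x in G, D x :=
    by have := setIntegral_ge_of_const_le hGmeas hGne hGD hIG; rw [smul_eq_mul, mul_comm] at this; exact this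
  have hint2 : (∫ x in G, D x) ≤ ∫ x in Set.Ioc (0:ℝ) 1, D x := by
    apply setIntegral_mono_set hIntOn
    · exact Filter.Eventually.of_forall (fun x => hDnn x)
    · exact (Set.diff_subset : G ⊆ Set.Ioc (0:ℝ) 1).eventuallyLE
  have hint3 : (∫ x in (0:ℝ)..1, D x) = ∫ x in Set.Ioc (0:ℝ) 1, D x :=
    intervalIntegral.integral_of_le (by norm_num)
  have hIlow : thr * (8/9 : ℝ) ≤ ∫ x in (0:ℝ)..1, D x := by
    rw [hint3]
    calc thr * (8/9:ℝ) ≤ thr * (volume G).toReal :=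
          mul_le_mul_of_nonneg_left hGtoReal hthrnn
      _ ≤ ∫ x in G, D x := hint1
      _ ≤ _ := hint2
  have hKr1 : K ^ (r+1) = K ^ r * K := by
    rw [Real.rpow_add hKpos, Real.rpow_one]
  have hKthr : K ^ r * thr = s0 := by
    rw [hthr]; field_simp
  have h4 : K ^ (r+1) * (thr * (8/9:ℝ)) ≤ K ^ (r+1) * ∫ x in (0:ℝ)..1, D x :=
    mul_le_mul_of_nonneg_left hIlow (Real.rpow_pos_of_pos hKpos _).le
  have h5 : K ^ (r+1) * (thr * (8/9:ℝ)) = (8/9:ℝ) * K * s0 := by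
    rw [hKr1, show K ^ r * K * (thr * (8/9:ℝ)) = (8/9:ℝ) * K * (K ^ r * thr) from by ring,
      hKthr]
  show s0 ≤ K ^ (r+1) * ∫ x in (0:ℝ)..1, D x
  nlinarith [h4, h5, hs0nn, hK20]
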